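/- arXiv:2510.12980 — 4 statements merged into one kernel-verified Lean document; each statement's English description precedes it below -/
import Mathlib

section
/- Let f: X → X be a continuous map of an infinite compact metric space. If f is topologically transitive and the set of periodic points of f is dense in X, then the set of periodic points is not all of X, i.e., there exists a non-periodic point. -/
/-- A topologically transitive continuous map of an infinite compact metric
space with dense periodic points has a non-periodic point. -/
theorem periodic_points_ne_univ
    {X : Type*} [MetricSpace X] [CompactSpace X] [Infinite X]
    (f : X → X) (hf : Continuous f)
    (htrans : ∀ U V : Set X, IsOpen U → IsOpen V → U.Nonempty → V.Nonempty →
      ∃ n : ℕ, 0 < n ∧ (f^[n] '' U ∩ V).Nonempty)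
    (hdense : Dense {x : X | ∃ n : ℕ, 1 ≤ n ∧ f^[n] x = x}) :
    ∃ x : X, ¬ ∃ n : ℕ, 1 ≤ n ∧ f^[n] x = x := by
  classical
  by_contra h
  push_neg at h
  -- every point is periodic
  have hall : ∀ x : X, ∃ n : ℕ, 1 ≤ n ∧ f^[n] x = x := by
    intro x
    obtain ⟨n, hn, hx⟩ := h x
    exact ⟨n, hn, hx⟩
  -- Fix sets
  set F : ℕ → Set X := fun n => {x : X | f^[n+1] x = x} with hF
  have hFclosed : ∀ n, IsClosed (F n) := fun n =>
    isClosed_eq ((hf.iterate (n+1))) continuous_id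
  have hFcover : (⋃ n, F n) = Set.univ := by
    ext x
    simp only [Set.mem_iUnion, Set.mem_univ, iff_true]
    obtain ⟨n, hn, hx⟩ := hall x
    have hsub : n - 1 + 1 = n := Nat.sub_add_cancel hn
    exact ⟨n - 1, show f^[n - 1 + 1] x = x from hsub ▸ hx⟩
  obtain ⟨m, hm⟩ := nonempty_interior_of_iUnion_of_closed hFclosed hFcover
  set N := m + 1 with hN
  -- F m is invariant under f^[n]
  have hinv : ∀ (n : ℕ) (x : X), x ∈ F m → f^[n] x ∈ F m := by
    intro n x hx
    show f^[N] (f^[n] x) = f^[n] x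
    rw [← Function.iterate_add_apply, Nat.add_comm, Function.iterate_add_apply, hx]
  -- F m is dense
  have hFdense : Dense (F m) := by
    rw [dense_iff_inter_open]
    intro V hV hVne
    obtain ⟨n, hn, z, hz⟩ := htrans (interior (F m)) V isOpen_interior hV hm hVne
    obtain ⟨⟨w, hw, hwz⟩, hzV⟩ := hz
    exact ⟨z, hzV, hwz ▸ hinv n w (interior_subset hw)⟩
  have hFuniv : F m = Set.univ := by
    have := hFdense.closure_eq
    rw [(hFclosed m).closure_eq] at this
    exact this
  have hid : ∀ x : X, f^[N] x = x := by
    intro x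
    have : x ∈ F m := hFuniv ▸ Set.mem_univ x
    exact this
  -- hence f^[n] = f^[n % N]
  have hpow : ∀ (k : ℕ) (x : X), (f^[N])^[k] x = x := by
    intro k x
    induction k with
    | zero => simp
    | succ k ih => rw [Function.iterate_succ_apply', ih, hid]
  have hmod : ∀ (n : ℕ) (x : X), f^[n] x = f^[n % N] x := by
    intro n x
    conv_lhs => rw [← Nat.mod_add_div n N]
    rw [Function.iterate_add_apply, Function.iterate_mul, hpow]
  -- now derive contradiction from infinite X
  obtain ⟨x⟩ := ‹Infinite X›.nonempty
  obtain ⟨y, hy⟩ := Infinite.exists_notMem_finset ((Finset.range N).image (fun n => f^[n] x))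
  have hrange : (Finset.range N).Nonempty := ⟨0, Finset.mem_range.mpr (Nat.succ_pos m)⟩
  set r := (Finset.range N).inf' hrange (fun n => dist y (f^[n] x)) with hr
  have hrpos : 0 < r := by
    rw [hr, Finset.lt_inf'_iff]
    intro n hn
    rw [dist_pos]
    intro hcontra
    exact hy (Finset.mem_image.mpr ⟨n, hn, hcontra.symm⟩)
  -- uniform smallness
  have hcont : ∀ n : ℕ, ∃ δ > 0, ∀ a, dist a x < δ → dist (f^[n] a) (f^[n] x) < r / 2 := by
    intro n
    exact Metric.continuous_iff.mp (hf.iterate n) x (r/2) (by linarith)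
  choose δ hδpos hδ using hcont
  set Δ := (Finset.range N).inf' hrange δ with hΔ
  have hΔpos : 0 < Δ := by
    rw [hΔ, Finset.lt_inf'_iff]
    intro n _
    exact hδpos n
  obtain ⟨n, hn, z, ⟨⟨w, hw, hwz⟩, hzV⟩⟩ := htrans (Metric.ball x Δ) (Metric.ball y (r/2))
    Metric.isOpen_ball Metric.isOpen_ball ⟨x, Metric.mem_ball_self hΔpos⟩
    ⟨y, Metric.mem_ball_self (by linarith)⟩
  -- z = f^[n] w, dist z y < r/2, dist w x < Δ
  have hnm : n % N ∈ Finset.range N := Finset.mem_range.mpr (Nat.mod_lt n (Nat.succ_pos m))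
  have h1 : dist (f^[n % N] w) (f^[n % N] x) < r / 2 := by
    apply hδ
    calc dist w x < Δ := Metric.mem_ball.mp hw
      _ ≤ δ (n % N) := Finset.inf'_le _ hnm
  have h2 : r ≤ dist y (f^[n % N] x) := Finset.inf'_le _ hnm
  have h3 : dist z y < r / 2 := Metric.mem_ball.mp hzV
  have hz' : z = f^[n % N] w := by rw [← hwz, hmod]
  have : dist y (f^[n % N] x) ≤ dist y z + dist z (f^[n % N] x) := dist_triangle _ _ _
  rw [hz'] at h3
  rw [dist_comm] at h3
  rw [hz'] at this
  linarith
end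

section
/- Let f: X → X be a continuous map of an infinite compact metric space. If f is topologically transitive and the periodic points of f are dense in X, then f has sensitive dependence on initial conditions: there exists δ > 0 such that for every x ∈ X and every neighborhood U of x there exist y ∈ U and n ≥ 0 with d(f^n(x), f^n(y)) > δ. -/
lemma iter_mod {X : Type*} (f : X → X) {q : X} {m : ℕ} (hq : f^[m] q = q)
    (i : ℕ) : f^[i] q = f^[i % m] q := by
  conv_lhs => rw [← Nat.mod_add_div i m, Function.iterate_add_apply]
  congr 1
  rw [Function.iterate_mul]
  exact Function.iterate_fixed hq _

lemma orbit_finite {X : Type*} (f : X → X) {q : X} {m : ℕ} (hm : 0 < m) (hq : f^[m] q = q) :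
    (Set.range fun i => f^[i] q).Finite := by
  apply Set.Finite.subset ((Set.finite_Iio m).image (fun i => f^[i] q))
  rintro _ ⟨i, rfl⟩
  exact ⟨i % m, Nat.mod_lt _ hm, (iter_mod f hq i).symm⟩

/-- A topologically transitive continuous map of an infinite compact metric
space with dense periodic points has sensitive dependence on initial conditions. -/
theorem sensitive_dependence
    {X : Type*} [MetricSpace X] [CompactSpace X] [Infinite X]
    (f : X → X) (hf : Continuous f)
    (htrans : ∀ U V : Set X, IsOpen U → IsOpen V → U.Nonempty → V.Nonempty →
      ∃ n : ℕ, 0 < n ∧ (f^[n] '' U ∩ V).Nonempty)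
    (hdense : Dense {x : X | ∃ n : ℕ, 1 ≤ n ∧ f^[n] x = x}) :
    ∃ δ : ℝ, 0 < δ ∧ ∀ x : X, ∀ U ∈ nhds x, ∃ y ∈ U, ∃ n : ℕ,
      δ < dist (f^[n] x) (f^[n] y) := by
  classical
  obtain ⟨x0⟩ : Nonempty X := inferInstance
  -- first periodic point
  obtain ⟨q1, ⟨m1, hm1, hq1⟩, -⟩ :=
    hdense.exists_mem_open isOpen_univ ⟨x0, Set.mem_univ x0⟩
  set O1 : Set X := Set.range fun i => f^[i] q1 with hO1def
  have hO1fin : O1.Finite := orbit_finite f hm1 hq1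
  have hO1closed : IsClosed O1 := hO1fin.isClosed
  -- a second periodic point outside the first orbit
  obtain ⟨y0, hy0⟩ : O1ᶜ.Nonempty := (hO1fin.infinite_compl).nonempty
  obtain ⟨q2, ⟨m2, hm2, hq2⟩, hq2mem⟩ :=
    hdense.exists_mem_open hO1closed.isOpen_compl ⟨y0, hy0⟩
  set O2 : Set X := Set.range fun i => f^[i] q2 with hO2def
  have hO2fin : O2.Finite := orbit_finite f hm2 hq2
  -- the two orbits are disjoint
  have hdisj : ∀ i j : ℕ, f^[i] q1 ≠ f^[j] q2 := by
    intro i j hij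
    apply hq2mem
    have h1 : f^[m2 * j] q2 = q2 := by
      rw [Function.iterate_mul]; exact Function.iterate_fixed hq2 _
    have hj : j ≤ m2 * j := Nat.le_mul_of_pos_left j hm2
    have h2 : f^[m2 * j] q2 = f^[m2 * j - j] (f^[j] q2) := by
      rw [← Function.iterate_add_apply, Nat.sub_add_cancel hj]
    rw [← h1, h2, ← hij, ← Function.iterate_add_apply]
    exact ⟨m2 * j - j + i, rfl⟩
  -- positive distance between the two orbits
  have hO2ne : O2.Nonempty := ⟨q2, ⟨0, rfl⟩⟩
  obtain ⟨a0, ha0mem, ha0min⟩ :=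
    hO1fin.isCompact.exists_isMinOn ⟨q1, ⟨0, rfl⟩⟩
      (Metric.continuous_infDist_pt O2).continuousOn
  set δ0 : ℝ := Metric.infDist a0 O2 with hδ0def
  have ha0not : a0 ∉ O2 := by
    obtain ⟨i, rfl⟩ := ha0mem
    rintro ⟨j, hj⟩
    exact hdisj i j hj.symm
  have hδ0pos : 0 < δ0 := by
    rw [hδ0def, ← hO2fin.isClosed.notMem_iff_infDist_pos hO2ne]
    exact ha0not
  have hkey : ∀ i j : ℕ, δ0 ≤ dist (f^[i] q1) (f^[j] q2) := by
    intro i j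
    exact le_trans (ha0min ⟨i, rfl⟩) (Metric.infDist_le_dist_of_mem ⟨j, rfl⟩)
  -- every point is δ0/2 - far from one of the two orbits
  have hfar : ∀ x : X, ∃ q : X, ∀ i : ℕ, δ0 / 2 ≤ dist x (f^[i] q) := by
    intro x
    by_cases h : ∀ i : ℕ, δ0 / 2 ≤ dist x (f^[i] q1)
    · exact ⟨q1, h⟩
    · push_neg at h
      obtain ⟨i0, hi0⟩ := h
      refine ⟨q2, fun j => ?_⟩
      have h1 := hkey i0 j
      have h2 := dist_triangle (f^[i0] q1) x (f^[j] q2)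
      have h3 : dist (f^[i0] q1) x = dist x (f^[i0] q1) := dist_comm _ _
      linarith
  -- the sensitivity constant
  refine ⟨δ0 / 9, by positivity, ?_⟩
  intro x U hU
  obtain ⟨ε, hε, hball⟩ := Metric.mem_nhds_iff.mp hU
  set ε' : ℝ := min ε (δ0 / 9) with hε'def
  have hε'pos : 0 < ε' := lt_min hε (by positivity)
  -- a periodic point p close to x
  obtain ⟨p, ⟨mp, hmp, hp⟩, hpmem⟩ :=
    hdense.exists_mem_open Metric.isOpen_ball ⟨x, Metric.mem_ball_self hε'pos⟩ (U := Metric.ball x ε')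
  -- a point q whose orbit stays far from x
  obtain ⟨q, hq⟩ := hfar x
  -- the open set W around q
  set W : Set X := ⋂ i ∈ Finset.range (mp + 1), f^[i] ⁻¹' Metric.ball (f^[i] q) (δ0 / 9)
    with hWdef
  have hWopen : IsOpen W := by
    apply isOpen_biInter_finset
    intro i _
    exact (Metric.isOpen_ball).preimage (hf.iterate i)
  have hqW : q ∈ W := by
    rw [hWdef]
    refine Set.mem_iInter₂.mpr fun i _ => ?_
    exact Metric.mem_ball_self (by positivity)
  -- use transitivity
  obtain ⟨n, hn, w, ⟨z, hzU', hzw⟩, hwW⟩ :=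
    htrans (Metric.ball x ε') W Metric.isOpen_ball hWopen
      ⟨x, Metric.mem_ball_self hε'pos⟩ ⟨q, hqW⟩
  -- choose N : a multiple of mp with n ≤ N ≤ n + mp
  set b : ℕ := n % mp with hbdef
  set r : ℕ := mp - b with hrdef
  set N : ℕ := n + r with hNdef
  have hb : b < mp := Nat.mod_lt _ hmp
  have hrle : r ≤ mp := Nat.sub_le _ _
  have hNmod : N % mp = 0 := by
    have h1 : N = mp * (n / mp) + mp := by
      have := Nat.mod_add_div n mp
      omega
    have h2 : N = mp * (n / mp + 1) := by rw [Nat.mul_succ]; omega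
    rw [h2]; exact Nat.mul_mod_right _ _
  have hNp : f^[N] p = p := by
    rw [iter_mod f hp N, hNmod, Function.iterate_zero_apply]
  have hNz : f^[N] z ∈ Metric.ball (f^[r] q) (δ0 / 9) := by
    have h1 : f^[N] z = f^[r] (f^[n] z) := by
      rw [hNdef, Nat.add_comm, Function.iterate_add_apply]
    have h2 : f^[n] z ∈ f^[r] ⁻¹' Metric.ball (f^[r] q) (δ0 / 9) := by
      rw [hzw]
      exact Set.mem_iInter₂.mp hwW r (Finset.mem_range.mpr (Nat.lt_succ_of_le hrle))
    rw [h1]; exact h2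
  -- distance estimates
  have d1 : dist x p < δ0 / 9 := by
    have := Metric.mem_ball.mp hpmem
    rw [dist_comm]
    exact lt_of_lt_of_le this (min_le_right ε (δ0 / 9))
  have d2 : dist (f^[N] z) (f^[r] q) < δ0 / 9 := Metric.mem_ball.mp hNz
  have d3 : δ0 / 2 ≤ dist x (f^[r] q) := hq r
  have t4 : dist x (f^[r] q) ≤ dist x p + dist p (f^[N] z) + dist (f^[N] z) (f^[r] q) :=
    dist_triangle4 x p (f^[N] z) (f^[r] q)
  have t5 : dist p (f^[N] z) ≤ dist (f^[N] x) p + dist (f^[N] x) (f^[N] z) := by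
    have := dist_triangle p (f^[N] x) (f^[N] z)
    have h := dist_comm p (f^[N] x)
    linarith
  by_cases hcase : δ0 / 9 < dist (f^[N] x) p
  · refine ⟨p, hball (Metric.mem_ball.mp hpmem |>.trans_le (min_le_left ε (δ0 / 9)) |> Metric.mem_ball.mpr), N, ?_⟩
    rw [hNp]
    exact hcase
  · push_neg at hcase
    refine ⟨z, hball ((Metric.ball_subset_ball (min_le_left ε (δ0 / 9))) hzU'), N, ?_⟩
    linarith
end

section
/- Let f: X → X be a homeomorphism of a compact metric space. If f has a weak generator (a finite open cover β such that every bi-infinite intersection ⋂_{n∈ℤ} f^{-n}(B_n), B_n ∈ β, contains at most one point), then f is expansive; in fact any Lebesgue number δ of β is an expansivity constant. -/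
/-- a homeomorphism of a compact metric space possessing a weak generator
(a finite open cover `β` all of whose bi-infinite intersections `⋂ₙ f^{-n}(Bₙ)` are at
most single points) is expansive; any Lebesgue number `δ` of `β` is an expansivity
constant: if `dist (fⁿ x) (fⁿ y) < δ` for all `n ∈ ℤ`, then `x = y`. -/
theorem weak_generator_implies_expansive
    {X : Type*} [MetricSpace X] [CompactSpace X]
    (f : Equiv.Perm X) (hf : Continuous f) (hf' : Continuous f.symm)
    {ι : Type*} [Finite ι] (β : ι → Set X)
    (hopen : ∀ i, IsOpen (β i)) (hcover : (⋃ i, β i) = Set.univ)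
    (hweak : ∀ B : ℤ → ι, (⋂ n : ℤ, (f ^ n : Equiv.Perm X) ⁻¹' (β (B n))).Subsingleton)
    (δ : ℝ) (hδ : 0 < δ)
    (hLeb : ∀ A : Set X, Metric.diam A < δ → ∃ i, A ⊆ β i) :
    ∀ x y : X, (∀ n : ℤ, dist ((f ^ n) x) ((f ^ n) y) < δ) → x = y := by
  intro x y h
  have hch : ∀ n : ℤ, ∃ i, ({(f ^ n) x, (f ^ n) y} : Set X) ⊆ β i := by
    intro n
    apply hLeb
    rw [Metric.diam_pair]
    exact h n
  choose B hB using hch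
  refine hweak B ?_ ?_ <;> refine Set.mem_iInter.2 fun n => ?_
  · exact hB n (Set.mem_insert _ _)
  · exact hB n (Set.mem_insert_iff.2 (Or.inr rfl))
end

section
/- Let X be a compact metric space, f: X → X a continuous surjective local homeomorphism. Then there exist λ, μ > 0 such that every subset D ⊆ X of diameter less than λ admits a decomposition f^{-1}(D) = D₁ ∪ ⋯ ∪ D_k where f maps each D_i homeomorphically onto D, and for i ≠ j every point of D_i is at distance at least 2μ from every point of D_j. -/
open Metric Set Filter Topology

/-- If `f` is continuous, open, and injective on an open set `U`, then its restriction to any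
subset `S ⊆ U` is inducing. -/
lemma eilenberg_aux_inducing {X Y : Type*} [TopologicalSpace X] [TopologicalSpace Y]
    {f : X → Y} {U S : Set X} (hc : Continuous f) (ho : IsOpenMap f) (hU : IsOpen U)
    (hinj : Set.InjOn f U) (hSU : S ⊆ U) :
    Topology.IsInducing (fun a : S => f a) := by
  rw [isInducing_iff_nhds]
  intro a
  refine le_antisymm ((hc.comp continuous_subtype_val).tendsto a).le_comap ?_
  rw [nhds_subtype_eq_comap]
  refine fun t ht => ?_
  rw [Filter.mem_comap] at ht ⊢
  obtain ⟨V', hV', hV't⟩ := ht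
  obtain ⟨V, hVV', hV, haV⟩ := mem_nhds_iff.mp hV'
  refine ⟨f '' (U ∩ V), (ho _ (hU.inter hV)).mem_nhds ⟨a, ⟨hSU a.2, haV⟩, rfl⟩, ?_⟩
  intro s hs
  obtain ⟨u, hu, hfu⟩ := hs
  have hsu : (s : X) = u := hinj (hSU s.2) hu.1 hfu.symm
  exact hV't (by rw [Set.mem_preimage, hsu]; exact hVV' hu.2)

/-- Eilenberg: if `f` is a continuous surjective local homeomorphism of a
compact metric space `X`, then there exist `L, μ > 0` such that every set `D` of diameter
less than `L` has `f⁻¹(D) = D₁ ∪ ⋯ ∪ D_k`, where `f` maps each `Dᵢ` homeomorphically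
onto `D`, and points of distinct pieces `Dᵢ`, `Dⱼ` are at distance at least `2μ`. -/
theorem eilenberg_even_covering
    {X : Type*} [MetricSpace X] [CompactSpace X]
    (f : X → X) (hsurj : Function.Surjective f) (hloc : IsLocalHomeomorph f) :
    ∃ L : ℝ, 0 < L ∧ ∃ μ : ℝ, 0 < μ ∧
      ∀ D : Set X, Metric.diam D < L →
        ∃ (k : ℕ) (Ds : Fin k → Set X),
          f ⁻¹' D = ⋃ i, Ds i ∧
          (∀ i, Set.BijOn f (Ds i) D ∧
            ∃ h : (Ds i) ≃ₜ D, ∀ a : Ds i, (h a : X) = f a) ∧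
          (∀ i j, i ≠ j → ∀ a ∈ Ds i, ∀ b ∈ Ds j, 2 * μ ≤ dist a b) := by
  have hcont : Continuous f := hloc.continuous
  rcases isEmpty_or_nonempty X with hX | hX
  · refine ⟨1, one_pos, 1, one_pos, fun D _ => ⟨0, fun _ => ∅, ?_, ?_, ?_⟩⟩
    · have : f ⁻¹' D = ∅ := Set.eq_empty_of_isEmpty _
      simp [this]
    · exact fun i => i.elim0
    · exact fun i => i.elim0
  -- Step 1: a uniform separation `δ` between distinct points of a fiber.
  obtain ⟨δ, hδ, hsep⟩ : ∃ δ : ℝ, 0 < δ ∧ ∀ a b : X, f a = f b → a ≠ b → δ ≤ dist a b := by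
    set S : Set (X × X) := {p | f p.1 = f p.2 ∧ p.1 ≠ p.2} with hS
    have hdisj : ∀ p ∈ closure S, p ∉ Set.diagonal X := by
      rintro ⟨a, b⟩ hp hdiag
      have hab : a = b := hdiag
      subst hab
      obtain ⟨e, hae, hfe⟩ := hloc a
      have hnb : e.source ×ˢ e.source ∈ 𝓝 ((a, a) : X × X) :=
        (e.open_source.prod e.open_source).mem_nhds ⟨hae, hae⟩
      obtain ⟨q, hq, hqS⟩ := mem_closure_iff_nhds.mp hp _ hnb
      refine hqS.2 (e.injOn hq.1 hq.2 ?_)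
      have := hqS.1
      rw [hfe] at this
      exact this
    rcases (closure S).eq_empty_or_nonempty with hSe | hSne
    · refine ⟨1, one_pos, fun a b hfab hab => ?_⟩
      exfalso
      have : (a, b) ∈ closure S := subset_closure ⟨hfab, hab⟩
      simp [hSe] at this
    · have hcomp : IsCompact (closure S) := isClosed_closure.isCompact
      obtain ⟨p₀, hp₀, hmin⟩ := hcomp.exists_isMinOn hSne
        (Metric.continuous_infDist_pt (Set.diagonal X)).continuousOn
      have hdiagne : (Set.diagonal X).Nonempty := ⟨(hX.some, hX.some), rfl⟩
      have hpos : 0 < Metric.infDist p₀ (Set.diagonal X) :=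
        (isClosed_diagonal.notMem_iff_infDist_pos hdiagne).mp (hdisj p₀ hp₀)
      refine ⟨_, hpos, fun a b hfab hab => ?_⟩
      have h1 : Metric.infDist ((a, b) : X × X) (Set.diagonal X) ≤ dist a b := by
        have h2 := Metric.infDist_le_dist_of_mem (x := ((a, b) : X × X))
          (y := ((a, a) : X × X)) (Set.mem_diagonal a)
        have h3 : dist ((a, b) : X × X) ((a, a) : X × X) = dist a b := by
          rw [Prod.dist_eq, dist_comm b a]
          simp [max_eq_right dist_nonneg]
        rwa [h3] at h2
      exact le_trans (hmin (subset_closure ⟨hfab, hab⟩)) h1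
  -- Step 2: uniform openness.
  obtain ⟨L, hL, hopenL⟩ : ∃ L : ℝ, 0 < L ∧
      ∀ x : X, Metric.ball (f x) L ⊆ f '' Metric.ball x (δ / 4) := by
    have key : ∀ x : X, ∃ ρ : ℝ, 0 < ρ ∧ Metric.ball (f x) ρ ⊆ f '' Metric.ball x (δ / 8) := by
      intro x
      have hopen' : IsOpen (f '' Metric.ball x (δ / 8)) := hloc.isOpenMap _ Metric.isOpen_ball
      have hmem : f x ∈ f '' Metric.ball x (δ / 8) :=
        ⟨x, Metric.mem_ball_self (by linarith), rfl⟩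
      obtain ⟨ρ, hρ, hball⟩ := Metric.isOpen_iff.mp hopen' _ hmem
      exact ⟨ρ, hρ, hball⟩
    choose ρ hρpos hρ using key
    set W : X → Set X := fun x => Metric.ball x (δ / 8) ∩ f ⁻¹' Metric.ball (f x) (ρ x / 2)
      with hW
    have hWopen : ∀ x, IsOpen (W x) := fun x =>
      Metric.isOpen_ball.inter (Metric.isOpen_ball.preimage hcont)
    have hWmem : ∀ x, x ∈ W x := fun x =>
      ⟨Metric.mem_ball_self (by linarith), Metric.mem_ball_self (by linarith [hρpos x])⟩
    obtain ⟨t, hcov⟩ := isCompact_univ.elim_finite_subcover W hWopen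
      (fun x _ => Set.mem_iUnion.mpr ⟨x, hWmem x⟩)
    have htne : t.Nonempty := by
      rcases Set.mem_iUnion₂.mp (hcov (Set.mem_univ hX.some)) with ⟨c, hc, _⟩
      exact ⟨c, hc⟩
    refine ⟨t.inf' htne (fun c => ρ c / 2), ?_, ?_⟩
    · rw [Finset.lt_inf'_iff]
      exact fun c _ => by linarith [hρpos c]
    · intro x y hy
      rcases Set.mem_iUnion₂.mp (hcov (Set.mem_univ x)) with ⟨c, hc, hxc⟩
      have hyL : dist y (f x) < ρ c / 2 :=
        lt_of_lt_of_le (Metric.mem_ball.mp hy) (Finset.inf'_le _ hc)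
      have hxfc : dist (f x) (f c) < ρ c / 2 := Metric.mem_ball.mp hxc.2
      have hyfc : y ∈ Metric.ball (f c) (ρ c) := by
        rw [Metric.mem_ball]
        calc dist y (f c) ≤ dist y (f x) + dist (f x) (f c) := dist_triangle _ _ _
          _ < ρ c / 2 + ρ c / 2 := by linarith
          _ = ρ c := by ring
      obtain ⟨z, hz, hfz⟩ := hρ c hyfc
      refine ⟨z, ?_, hfz⟩
      rw [Metric.mem_ball] at hz ⊢
      have hxc' : dist x c < δ / 8 := Metric.mem_ball.mp hxc.1
      calc dist z x ≤ dist z c + dist c x := dist_triangle _ _ _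
        _ < δ / 8 + δ / 8 := by rw [dist_comm c x]; exact add_lt_add hz hxc'
        _ ≤ δ / 4 := by linarith
  refine ⟨L, hL, δ / 8, by linarith, ?_⟩
  intro D hD
  rcases D.eq_empty_or_nonempty with rfl | ⟨y₀, hy₀⟩
  · exact ⟨0, fun _ => ∅, by simp, fun i => i.elim0, fun i => i.elim0⟩
  have hbdd : Bornology.IsBounded D := isCompact_univ.isBounded.subset (Set.subset_univ D)
  set F := f ⁻¹' {y₀} with hFdef
  have hFmem : ∀ z, z ∈ F ↔ f z = y₀ := fun z => Iff.rfl
  have hFc : IsCompact F := (isClosed_singleton.preimage hcont).isCompact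
  have hFfin : F.Finite := by
    obtain ⟨b', hb'F, hb'fin, hcov⟩ := hFc.elim_finite_subcover_image
      (b := F) (c := fun x => Metric.ball x (δ / 2)) (fun x _ => Metric.isOpen_ball)
      (fun z hz => Set.mem_biUnion hz (Metric.mem_ball_self (by linarith)))
    refine hb'fin.subset fun z hz => ?_
    obtain ⟨w, hw, hzw⟩ := Set.mem_iUnion₂.mp (hcov hz)
    have hzweq : z = w := by
      by_contra hne'
      have h1 := hsep z w (by rw [(hFmem z).mp hz, (hFmem w).mp (hb'F hw)]) hne'
      have h2 := Metric.mem_ball.mp hzw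
      linarith
    rw [hzweq]; exact hw
  set t := hFfin.toFinset with htdef
  set k := t.card with hkdef
  set e := t.equivFin with hedef
  set x : Fin k → X := fun i => ((e.symm i : t) : X) with hxdef
  have hxF : ∀ i, f (x i) = y₀ := fun i =>
    (hFmem _).mp (hFfin.mem_toFinset.mp (e.symm i).2)
  have hxinj : ∀ i j, i ≠ j → x i ≠ x j := by
    intro i j hij hx'
    exact hij (e.symm.injective (Subtype.coe_injective hx'))
  have hxsurj : ∀ z ∈ F, ∃ i, x i = z := by
    intro z hz
    refine ⟨e ⟨z, hFfin.mem_toFinset.mpr hz⟩, ?_⟩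
    simp [hxdef]
  have hnear : ∀ a, f a ∈ D → ∃ i, dist a (x i) < δ / 4 := by
    intro a ha
    have hy : y₀ ∈ Metric.ball (f a) L := by
      rw [Metric.mem_ball]
      exact lt_of_le_of_lt (Metric.dist_le_diam_of_mem hbdd hy₀ ha) hD
    obtain ⟨z, hz, hfz⟩ := hopenL a hy
    obtain ⟨i, hi⟩ := hxsurj z ((hFmem z).mpr hfz)
    rw [Metric.mem_ball] at hz
    exact ⟨i, by rw [hi, dist_comm]; exact hz⟩
  set Ds : Fin k → Set X := fun i => f ⁻¹' D ∩ Metric.ball (x i) (δ / 4) with hDsdef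
  have hDsball : ∀ i, ∀ a ∈ Ds i, dist a (x i) < δ / 4 := fun i a ha =>
    Metric.mem_ball.mp ha.2
  have hbij : ∀ i, Set.BijOn f (Ds i) D := by
    intro i
    refine ⟨fun a ha => ha.1, ?_, ?_⟩
    · intro a ha b hb hab
      by_contra hne'
      have h1 := hsep a b hab hne'
      have h2 := hDsball i a ha
      have h3 := hDsball i b hb
      have : dist a b ≤ dist a (x i) + dist (x i) b := dist_triangle _ _ _
      rw [dist_comm (x i) b] at this
      linarith
    · intro y hy
      have hy' : y ∈ Metric.ball (f (x i)) L := by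
        rw [Metric.mem_ball, hxF i]
        exact lt_of_le_of_lt (Metric.dist_le_diam_of_mem hbdd hy hy₀) hD
      obtain ⟨z, hz, hfz⟩ := hopenL (x i) hy'
      exact ⟨z, ⟨by rw [Set.mem_preimage, hfz]; exact hy, hz⟩, hfz⟩
  refine ⟨k, Ds, ?_, ?_, ?_⟩
  · ext a
    simp only [Set.mem_iUnion, hDsdef, Set.mem_inter_iff, Set.mem_preimage, Metric.mem_ball]
    constructor
    · intro ha
      obtain ⟨i, hi⟩ := hnear a ha
      exact ⟨i, ha, hi⟩
    · rintro ⟨i, hi, _⟩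
      exact hi
  · intro i
    refine ⟨hbij i, ?_⟩
    have hinjU : Set.InjOn f (Metric.ball (x i) (δ / 2)) := by
      intro a ha b hb hab
      by_contra hne'
      have h1 := hsep a b hab hne'
      rw [Metric.mem_ball] at ha hb
      have : dist a b ≤ dist a (x i) + dist (x i) b := dist_triangle _ _ _
      rw [dist_comm (x i) b] at this
      linarith
    have hsub : Ds i ⊆ Metric.ball (x i) (δ / 2) := by
      intro a ha
      rw [Metric.mem_ball]
      have := hDsball i a ha
      linarith
    have hind : Topology.IsInducing (fun a : (Ds i) => f a) :=
      eilenberg_aux_inducing hcont hloc.isOpenMap Metric.isOpen_ball hinjU hsub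
    have hind2 : Topology.IsInducing ((hbij i).equiv f) :=
      hind.codRestrict (fun a => (hbij i).mapsTo a.2)
    exact ⟨Equiv.toHomeomorphOfIsInducing _ hind2, fun a => rfl⟩
  · intro i j hij a ha b hb
    have h1 := hsep (x i) (x j) (by rw [hxF i, hxF j]) (hxinj i j hij)
    have h2 := hDsball i a ha
    have h3 := hDsball j b hb
    have h4 : dist (x i) (x j) ≤ dist (x i) a + dist a b + dist b (x j) :=
      dist_triangle4 _ _ _ _
    rw [dist_comm (x i) a, dist_comm b (x j)] at h4
    rw [dist_comm b (x j)] at h3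
    linarith
end
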